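/- Let A be a symmetric positive definite real 3×3 matrix and u ∈ ℝ³ a unit vector. Let R : ℝ → ℝ^{3×3}, θ : ℝ → ℝ, t₀ ∈ ℝ, ω ∈ ℝ³, v ∈ ℝ, and suppose R has derivative R(t₀)·ω^× at t₀ and θ has derivative v at t₀. Write R₀ := R(t₀), θ₀ := θ(t₀). Then the map t ↦ Ra(θ(t),u)·ψ(A·T(R(t),θ(t))) has derivative D_R(R₀,θ₀)·ω + D_θ(R₀,θ₀)·v at t₀. -/

import Mathlib

open Matrix

noncomputable section

abbrev M3 : Type := Matrix (Fin 3) (Fin 3) ℝ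
abbrev V3 : Type := Fin 3 → ℝ

/-- skew-symmetric matrix associated to `x`: `skew x *ᵥ y = x ×₃ y`. -/
def skew (x : V3) : M3 :=
  !![0, -x 2, x 1; x 2, 0, -x 0; -x 1, x 0, 0]

/-- the special orthogonal group SO(3) as a subset of 3×3 matrices -/
def SO3 : Set M3 := {R | Rᵀ * R = 1 ∧ R.det = 1}

/-- Rodrigues formula -/
def Ra (θ : ℝ) (u : V3) : M3 :=
  1 + Real.sin θ • skew u + (1 - Real.cos θ) • (skew u * skew u)

/-- `psi M = vec (P_a M)`, the vector part of the antisymmetric projection -/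
def psi (M : M3) : V3 :=
  ![(M 2 1 - M 1 2) / 2, (M 0 2 - M 2 0) / 2, (M 1 0 - M 0 1) / 2]

/-- the angular-warping transformation `T(R,θ) = R · Ra(θ,u)` -/
def Tmap (u : V3) (R : M3) (θ : ℝ) : M3 := R * Ra θ u

/-- the potential function `U(R,θ)` on SO(3) × ℝ -/
def Ufun (A : M3) (u : V3) (γ : ℝ) (R : M3) (θ : ℝ) : ℝ :=
  (A * (1 - Tmap u R θ)).trace + γ / 2 * θ ^ 2

/-- Euclidean norm on ℝ³ -/
def enorm3 (x : V3) : ℝ := Real.sqrt (x ⬝ᵥ x)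

/-- Frobenius norm of a 3×3 matrix -/
def fnorm (M : M3) : ℝ := Real.sqrt ((Mᵀ * M).trace)

/-- `E(M) := (tr(M) I − Mᵀ)/2` -/
def Emap (M : M3) : M3 := (2⁻¹ : ℝ) • (M.trace • (1 : M3) - Mᵀ)

/-- `D_R(R,θ)` from Lemma 2 -/
def DR (A : M3) (u : V3) (R : M3) (θ : ℝ) : M3 :=
  Ra θ u * Emap (A * Tmap u R θ) * (Ra θ u)ᵀ

/-- `D_θ(R,θ)` from Lemma 2 -/
def Dθ (A : M3) (u : V3) (R : M3) (θ : ℝ) : V3 :=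
  (Ra θ u * Emap (A * Tmap u R θ)) *ᵥ u - skew (Ra θ u *ᵥ psi (A * Tmap u R θ)) *ᵥ u

/-- Δ(v,u) from the construction of the synergistic gap -/
def Delta (A : M3) (v u : V3) : ℝ :=
  u ⬝ᵥ ((A.trace • (1 : M3) - A - (2 * (v ⬝ᵥ A *ᵥ v)) • ((1 : M3) - vecMulVec v v)) *ᵥ u)

/-- `v` is a unit eigenvector of `A` -/
def IsUnitEigen (A : M3) (v : V3) : Prop :=
  v ⬝ᵥ v = 1 ∧ ∃ lam : ℝ, A *ᵥ v = lam • v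

/-- Ā := (tr(A) I − A)/2 -/
def Abar (A : M3) : M3 := (2⁻¹ : ℝ) • (A.trace • (1 : M3) - A)

/-- `lam` is an eigenvalue of `M` -/
def IsEigen (M : M3) (lam : ℝ) : Prop := ∃ w : V3, w ≠ 0 ∧ M *ᵥ w = lam • w
attribute [local instance] Matrix.normedAddCommGroup Matrix.normedSpace


namespace PsiAux

lemma hu3 {u : V3} (hu : u ⬝ᵥ u = 1) : u 0 * u 0 + u 1 * u 1 + u 2 * u 2 = 1 := by
  simpa [dotProduct, Fin.sum_univ_three] using hu

/-- matrix multiplication as a continuous bilinear map -/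
noncomputable def mulCLM : M3 →L[ℝ] M3 →L[ℝ] M3 :=
  LinearMap.toContinuousLinearMap
    { toFun := fun M => LinearMap.toContinuousLinearMap
        { toFun := fun N => M * N
          map_add' := fun a b => Matrix.mul_add M a b
          map_smul' := fun r a => (Matrix.mul_smul M r a) }
      map_add' := by
        intro a b; apply ContinuousLinearMap.ext; intro N
        simp [Matrix.add_mul]
      map_smul' := by
        intro r a; apply ContinuousLinearMap.ext; intro N
        simp [Matrix.smul_mul] }

@[simp] lemma mulCLM_apply (M N : M3) : mulCLM M N = M * N := rfl

noncomputable def mulVecCLM : M3 →L[ℝ] V3 →L[ℝ] V3 :=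
  LinearMap.toContinuousLinearMap
    { toFun := fun M => LinearMap.toContinuousLinearMap (Matrix.mulVecLin M)
      map_add' := by
        intro a b; apply ContinuousLinearMap.ext; intro x
        simp [Matrix.add_mulVec]
      map_smul' := by
        intro r a; apply ContinuousLinearMap.ext; intro x
        simp [Matrix.smul_mulVec] }

@[simp] lemma mulVecCLM_apply (M : M3) (x : V3) : mulVecCLM M x = M *ᵥ x := rfl

noncomputable def psiCLM : M3 →L[ℝ] V3 :=
  LinearMap.toContinuousLinearMap
    { toFun := psi
      map_add' := by
        intro a b; funext i; fin_cases i <;> simp [psi, Matrix.add_apply] <;> ring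
      map_smul' := by
        intro r a; funext i; fin_cases i <;> simp [psi, Matrix.smul_apply, smul_eq_mul] <;> ring }

@[simp] lemma psiCLM_apply (M : M3) : psiCLM M = psi M := rfl

noncomputable instance instNACGM3CLM : NormedAddCommGroup (M3 →L[ℝ] M3) :=
  ContinuousLinearMap.toNormedAddCommGroup

noncomputable instance instNSM3CLM : NormedSpace ℝ (M3 →L[ℝ] M3) :=
  ContinuousLinearMap.toNormedSpace

lemma hasDerivAt_matmul {f g : ℝ → M3} {f' g' : M3} {t : ℝ}
    (hf : HasDerivAt f f' t) (hg : HasDerivAt g g' t) :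
    HasDerivAt (fun s => f s * g s) (f' * g t + f t * g') t := by
  have hc : HasDerivAt (fun s => mulCLM (f s)) (mulCLM f') t :=
    mulCLM.hasFDerivAt.comp_hasDerivAt t hf
  exact hc.clm_apply hg

lemma hasDerivAt_mulVec {f : ℝ → M3} {g : ℝ → V3} {f' : M3} {g' : V3} {t : ℝ}
    (hf : HasDerivAt f f' t) (hg : HasDerivAt g g' t) :
    HasDerivAt (fun s => f s *ᵥ g s) (f' *ᵥ g t + f t *ᵥ g') t := by
  have hc : HasDerivAt (fun s => mulVecCLM (f s)) (mulVecCLM f') t :=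
    mulVecCLM.hasFDerivAt.comp_hasDerivAt t hf
  simpa using hc.clm_apply hg

lemma psiE (M : M3) (x : V3) : psi (M * skew x) = Emap M *ᵥ x := by
  funext i; fin_cases i <;>
    simp [psi, Emap, skew, Matrix.mul_apply, Matrix.mulVec, dotProduct,
      Fin.sum_univ_three, Matrix.sub_apply, Matrix.smul_apply, Matrix.one_apply,
      Matrix.trace, Matrix.diag, smul_eq_mul, Matrix.transpose_apply] <;> ring

lemma skew_anticomm (a b : V3) : skew a *ᵥ b = -(skew b *ᵥ a) := by
  funext i; fin_cases i <;>
    simp [skew, Matrix.mulVec, dotProduct, Fin.sum_univ_three] <;> ring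

lemma skew_comm_Ra (u : V3) (θ : ℝ) : skew u * Ra θ u = Ra θ u * skew u := by
  simp [Ra, mul_add, add_mul, mul_smul_comm, smul_mul_assoc, mul_assoc]

set_option maxHeartbeats 1000000 in
lemma KRa {u : V3} (hu : u ⬝ᵥ u = 1) (θ : ℝ) :
    skew u * Ra θ u = Real.cos θ • skew u + Real.sin θ • (skew u * skew u) := by
  have hu' := hu3 hu
  ext i j
  fin_cases i <;> fin_cases j <;>
    simp [Ra, skew, Matrix.mul_apply, Fin.sum_univ_three, Matrix.add_apply,
      Matrix.smul_apply, Matrix.one_apply, smul_eq_mul]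
  · linear_combination (0:ℝ) * hu'
  · linear_combination (u 2 + -u 2*Real.cos θ) * hu'
  · linear_combination (-u 1 + u 1*Real.cos θ) * hu'
  · linear_combination (-u 2 + u 2*Real.cos θ) * hu'
  · linear_combination (0:ℝ) * hu'
  · linear_combination (u 0 + -u 0*Real.cos θ) * hu'
  · linear_combination (u 1 + -u 1*Real.cos θ) * hu'
  · linear_combination (-u 0 + u 0*Real.cos θ) * hu'
  · linear_combination (0:ℝ) * hu'


lemma skewT (x : V3) : (skew x)ᵀ = -skew x := by
  ext i j
  fin_cases i <;> fin_cases j <;> simp [skew]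

lemma RaT (u : V3) (θ : ℝ) :
    (Ra θ u)ᵀ = 1 + (-Real.sin θ) • skew u + (1 - Real.cos θ) • (skew u * skew u) := by
  rw [Ra, Matrix.transpose_add, Matrix.transpose_add, Matrix.transpose_one,
    Matrix.transpose_smul, Matrix.transpose_smul, Matrix.transpose_mul, skewT]
  rw [neg_mul_neg, smul_neg, neg_smul]
set_option maxHeartbeats 2000000 in
lemma Ra_orth {u : V3} (hu : u ⬝ᵥ u = 1) (θ : ℝ) :
    Ra θ u * (Ra θ u)ᵀ = 1 := by
  have hu' := hu3 hu
  have hsc := Real.sin_sq_add_cos_sq θ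
  rw [RaT]
  ext i j
  fin_cases i <;> fin_cases j <;>
    simp [Ra, skew, Matrix.mul_apply, Fin.sum_univ_three, Matrix.add_apply,
      Matrix.smul_apply, Matrix.one_apply, smul_eq_mul]
  all_goals first
  | linear_combination (u 2*u 2 + (-2:ℝ)*u 2*u 2*Real.cos θ + u 2*u 2*Real.cos θ*Real.cos θ + u 1*u 1 + (-2:ℝ)*u 1*u 1*Real.cos θ + u 1*u 1*Real.cos θ*Real.cos θ) * hu' + (u 2*u 2 + u 1*u 1) * hsc
  | linear_combination (-u 0*u 1 + (2:ℝ)*u 0*u 1*Real.cos θ + -u 0*u 1*Real.cos θ*Real.cos θ) * hu' + (-u 0*u 1) * hsc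
  | linear_combination (-u 0*u 2 + (2:ℝ)*u 0*u 2*Real.cos θ + -u 0*u 2*Real.cos θ*Real.cos θ) * hu' + (-u 0*u 2) * hsc
  | linear_combination ((-1:ℝ) + Real.cos θ*Real.cos θ + Real.sin θ*Real.sin θ + u 2*u 2 + (-2:ℝ)*u 2*u 2*Real.cos θ + u 2*u 2*Real.cos θ*Real.cos θ + u 0*u 0 + (-2:ℝ)*u 0*u 0*Real.cos θ + u 0*u 0*Real.cos θ*Real.cos θ) * hu' + ((1:ℝ) + -u 1*u 1) * hsc
  | linear_combination (-u 1*u 2 + (2:ℝ)*u 1*u 2*Real.cos θ + -u 1*u 2*Real.cos θ*Real.cos θ) * hu' + (-u 1*u 2) * hsc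
  | linear_combination ((-1:ℝ) + Real.cos θ*Real.cos θ + Real.sin θ*Real.sin θ + u 1*u 1 + (-2:ℝ)*u 1*u 1*Real.cos θ + u 1*u 1*Real.cos θ*Real.cos θ + u 0*u 0 + (-2:ℝ)*u 0*u 0*Real.cos θ + u 0*u 0*Real.cos θ*Real.cos θ) * hu' + ((1:ℝ) + -u 2*u 2) * hsc

set_option maxHeartbeats 2000000 in
lemma conjT {u : V3} (hu : u ⬝ᵥ u = 1) (θ : ℝ) (x : V3) :
    (Ra θ u)ᵀ * skew x * Ra θ u = skew ((Ra θ u)ᵀ *ᵥ x) := by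
  have hu' := hu3 hu
  have hsc := Real.sin_sq_add_cos_sq θ
  rw [RaT]
  ext i j
  fin_cases i <;> fin_cases j <;>
    simp [Ra, skew, Matrix.mul_apply, Fin.sum_univ_three, Matrix.add_apply,
      Matrix.smul_apply, Matrix.one_apply, smul_eq_mul, Matrix.mulVec, dotProduct]
  all_goals first
  | ring1
  | linear_combination (-u 2*u 2*x 2 + (2:ℝ)*u 2*u 2*x 2*Real.cos θ + -u 2*u 2*x 2*Real.cos θ*Real.cos θ + -u 1*u 2*x 1 + (2:ℝ)*u 1*u 2*x 1*Real.cos θ + -u 1*u 2*x 1*Real.cos θ*Real.cos θ + -u 0*u 2*x 0 + (2:ℝ)*u 0*u 2*x 0*Real.cos θ + -u 0*u 2*x 0*Real.cos θ*Real.cos θ) * hu' + (-u 2*u 2*x 2 + -u 1*u 2*x 1 + -u 0*u 2*x 0) * hsc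
  | linear_combination (u 1*u 2*x 2 + (-2:ℝ)*u 1*u 2*x 2*Real.cos θ + u 1*u 2*x 2*Real.cos θ*Real.cos θ + u 1*u 1*x 1 + (-2:ℝ)*u 1*u 1*x 1*Real.cos θ + u 1*u 1*x 1*Real.cos θ*Real.cos θ + u 0*u 1*x 0 + (-2:ℝ)*u 0*u 1*x 0*Real.cos θ + u 0*u 1*x 0*Real.cos θ*Real.cos θ) * hu' + (u 1*u 2*x 2 + u 1*u 1*x 1 + u 0*u 1*x 0) * hsc
  | linear_combination (u 2*u 2*x 2 + (-2:ℝ)*u 2*u 2*x 2*Real.cos θ + u 2*u 2*x 2*Real.cos θ*Real.cos θ + u 1*u 2*x 1 + (-2:ℝ)*u 1*u 2*x 1*Real.cos θ + u 1*u 2*x 1*Real.cos θ*Real.cos θ + u 0*u 2*x 0 + (-2:ℝ)*u 0*u 2*x 0*Real.cos θ + u 0*u 2*x 0*Real.cos θ*Real.cos θ) * hu' + (u 2*u 2*x 2 + u 1*u 2*x 1 + u 0*u 2*x 0) * hsc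
  | linear_combination (x 0 + -x 0*Real.cos θ*Real.cos θ + -x 0*Real.sin θ*Real.sin θ + -u 0*u 2*x 2 + (2:ℝ)*u 0*u 2*x 2*Real.cos θ + -u 0*u 2*x 2*Real.cos θ*Real.cos θ + -u 0*u 1*x 1 + (2:ℝ)*u 0*u 1*x 1*Real.cos θ + -u 0*u 1*x 1*Real.cos θ*Real.cos θ + -u 0*u 0*x 0 + (2:ℝ)*u 0*u 0*x 0*Real.cos θ + -u 0*u 0*x 0*Real.cos θ*Real.cos θ) * hu' + (-x 0 + u 2*u 2*x 0 + u 1*u 1*x 0 + -u 0*u 2*x 2 + -u 0*u 1*x 1) * hsc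
  | linear_combination (-u 1*u 2*x 2 + (2:ℝ)*u 1*u 2*x 2*Real.cos θ + -u 1*u 2*x 2*Real.cos θ*Real.cos θ + -u 1*u 1*x 1 + (2:ℝ)*u 1*u 1*x 1*Real.cos θ + -u 1*u 1*x 1*Real.cos θ*Real.cos θ + -u 0*u 1*x 0 + (2:ℝ)*u 0*u 1*x 0*Real.cos θ + -u 0*u 1*x 0*Real.cos θ*Real.cos θ) * hu' + (-u 1*u 2*x 2 + -u 1*u 1*x 1 + -u 0*u 1*x 0) * hsc
  | linear_combination (-x 0 + x 0*Real.cos θ*Real.cos θ + x 0*Real.sin θ*Real.sin θ + u 0*u 2*x 2 + (-2:ℝ)*u 0*u 2*x 2*Real.cos θ + u 0*u 2*x 2*Real.cos θ*Real.cos θ + u 0*u 1*x 1 + (-2:ℝ)*u 0*u 1*x 1*Real.cos θ + u 0*u 1*x 1*Real.cos θ*Real.cos θ + u 0*u 0*x 0 + (-2:ℝ)*u 0*u 0*x 0*Real.cos θ + u 0*u 0*x 0*Real.cos θ*Real.cos θ) * hu' + (x 0 + -u 2*u 2*x 0 + -u 1*u 1*x 0 + u 0*u 2*x 2 + u 0*u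 1*x 1) * hsc


lemma psi_add (X Y : M3) : psi (X + Y) = psi X + psi Y := by
  funext i; fin_cases i <;> simp [psi, Matrix.add_apply] <;> ring

lemma psi_smul (r : ℝ) (X : M3) : psi (r • X) = r • psi X := by
  funext i; fin_cases i <;> simp [psi, Matrix.smul_apply, smul_eq_mul] <;> ring

end PsiAux

open PsiAux
theorem deriv_of_psi_term
    (A : M3) (hA : A.PosDef) (u : V3) (hu : u ⬝ᵥ u = 1)
    (R : ℝ → M3) (θ : ℝ → ℝ) (t₀ : ℝ) (ω : V3) (v : ℝ)
    (hR : HasDerivAt R (R t₀ * skew ω) t₀) (hθ : HasDerivAt θ v t₀) :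
    HasDerivAt (fun t => Ra (θ t) u *ᵥ psi (A * Tmap u (R t) (θ t)))
      (DR A u (R t₀) (θ t₀) *ᵥ ω + v • Dθ A u (R t₀) (θ t₀)) t₀ := by
  set P : M3 := Ra (θ t₀) u with hP_def
  set K : M3 := skew u with hK_def
  have hP : HasDerivAt (fun t => Ra (θ t) u) (v • (K * P)) t₀ := by
    have h1 : HasDerivAt (fun t => Real.sin (θ t) • K) ((Real.cos (θ t₀) * v) • K) t₀ :=
      hθ.sin.smul_const K
    have h2 : HasDerivAt (fun t => (1 - Real.cos (θ t)) • (K * K))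
        ((0 - -Real.sin (θ t₀) * v) • (K * K)) t₀ :=
      ((hasDerivAt_const t₀ (1:ℝ)).sub hθ.cos).smul_const (K * K)
    have h : HasDerivAt (fun t => (1:M3) + Real.sin (θ t) • K + (1 - Real.cos (θ t)) • (K * K)) _ t₀ :=
      ((hasDerivAt_const t₀ (1:M3)).add h1).add h2
    have hfun : (fun t => (1:M3) + Real.sin (θ t) • K + (1 - Real.cos (θ t)) • (K * K))
        = fun t => Ra (θ t) u := rfl
    rw [hfun] at h
    convert h using 1
    rw [hK_def, hP_def, KRa hu (θ t₀), smul_add, smul_smul, smul_smul]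
    module
  have hM : HasDerivAt (fun t => R t * Ra (θ t) u)
      (R t₀ * skew ω * P + R t₀ * (v • (K * P))) t₀ :=
    hasDerivAt_matmul hR hP
  have hAM : HasDerivAt (fun t => A * (R t * Ra (θ t) u))
      (0 * (R t₀ * P) + A * (R t₀ * skew ω * P + R t₀ * (v • (K * P)))) t₀ :=
    hasDerivAt_matmul (hasDerivAt_const t₀ A) hM
  have hq : HasDerivAt (fun t => psi (A * (R t * Ra (θ t) u)))
      (psi (0 * (R t₀ * P) + A * (R t₀ * skew ω * P + R t₀ * (v • (K * P))))) t₀ :=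
    psiCLM.hasFDerivAt.comp_hasDerivAt t₀ hAM
  have hfull := hasDerivAt_mulVec hP hq
  have hgoalfun : (fun t => Ra (θ t) u *ᵥ psi (A * (R t * Ra (θ t) u)))
      = fun t => Ra (θ t) u *ᵥ psi (A * Tmap u (R t) (θ t)) := rfl
  rw [hgoalfun] at hfull
  convert hfull using 1
  have horth : P * Pᵀ = 1 := Ra_orth hu (θ t₀)
  have hcomm : K * P = P * K := skew_comm_Ra u (θ t₀)
  have e1 : A * (R t₀ * skew ω * P) = (A * (R t₀ * P)) * skew (Pᵀ *ᵥ ω) := by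
    rw [← conjT hu (θ t₀) ω]
    calc A * (R t₀ * skew ω * P) = A * (R t₀ * ((P * Pᵀ) * (skew ω * P))) := by
          rw [horth]; noncomm_ring
      _ = (A * (R t₀ * P)) * (Pᵀ * skew ω * P) := by noncomm_ring
  have e2 : A * (R t₀ * (K * P)) = (A * (R t₀ * P)) * skew u := by
    rw [hcomm, hK_def]; noncomm_ring
  have e3 : (K * P) *ᵥ psi (A * (R t₀ * P)) = -(skew (P *ᵥ psi (A * (R t₀ * P))) *ᵥ u) := by
    rw [← Matrix.mulVec_mulVec, hK_def, skew_anticomm]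
  have hTm : Tmap u (R t₀) (θ t₀) = R t₀ * P := rfl
  simp only [zero_mul, zero_add, Matrix.mul_add, Matrix.mul_smul, psi_add, psi_smul,
    Matrix.mulVec_add, Matrix.mulVec_smul, Matrix.smul_mulVec]
  rw [e1, e2, e3, psiE, psiE]
  simp only [Matrix.mulVec_mulVec]
  rw [DR, Dθ, hTm, ← hP_def]
  rw [← mul_assoc P]
  module
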